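/- arXiv:2109.13799 — 3 statements merged into one kernel-verified Lean document; each statement's English description precedes it below -/
import Mathlib

section
/- Define the unnormalized vector q = (q1,q2,q3,q4) by q1 = (x4+(x3−x4)·y2)·(y4+(y3−y4)·x2) − x3·y3·(x2−x4)·(y2−y4), q2 = (x4+(x3−x4)·y4)·((1−y2)−(y1−y2)·x1) − x4·(1−y1)·(x1−x3)·(y2−y4), q3 = ((1−x2)−(x1−x2)·y1)·(y4+(y3−y4)·x4) − (1−x1)·y4·(x2−x4)·(y1−y3), q4 = ((1−x2)−(x1−x2)·y3)·((1−y2)−(y1−y2)·x3) − (1−x2)·(1−y2)·(x1−x3)·(y1−y3). Then M q = q, i.e., q is a fixed vector (eigenvector with eigenvalue 1) of the transition matrix M. -/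
def pdMatrix (x1 x2 x3 x4 y1 y2 y3 y4 : ℝ) : Matrix (Fin 4) (Fin 4) ℝ :=
  !![x1*y1,       x2*y3,       x3*y2,       x4*y4;
     x1*(1-y1),   x2*(1-y3),   x3*(1-y2),   x4*(1-y4);
     (1-x1)*y1,   (1-x2)*y3,   (1-x3)*y2,   (1-x4)*y4;
     (1-x1)*(1-y1), (1-x2)*(1-y3), (1-x3)*(1-y2), (1-x4)*(1-y4)]

/-- The unnormalized stationary vector `q` of Eq. (2) is a fixed vector of `M`. -/
theorem pd_stationary_vector (x1 x2 x3 x4 y1 y2 y3 y4 : ℝ) :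
    let q : Fin 4 → ℝ := ![
      (x4+(x3-x4)*y2)*(y4+(y3-y4)*x2) - x3*y3*(x2-x4)*(y2-y4),
      (x4+(x3-x4)*y4)*((1-y2)-(y1-y2)*x1) - x4*(1-y1)*(x1-x3)*(y2-y4),
      ((1-x2)-(x1-x2)*y1)*(y4+(y3-y4)*x4) - (1-x1)*y4*(x2-x4)*(y1-y3),
      ((1-x2)-(x1-x2)*y3)*((1-y2)-(y1-y2)*x3) - (1-x2)*(1-y2)*(x1-x3)*(y1-y3)]
    (pdMatrix x1 x2 x3 x4 y1 y2 y3 y4).mulVec q = q := by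
  intro q
  funext i
  fin_cases i <;>
    simp [pdMatrix, Matrix.mulVec, dotProduct, Fin.sum_univ_four, q] <;> ring
end

section
/- The function H(x,y) = −(P−S)·(log x + 2·log(1−y)) + (T−P)·x − (T−S)·y is a conserved quantity of the dynamics ẋ = x·((T−2P+S) − (T−S)·y)·g(x,y), ẏ = (1−y)·((T−P)·x − (P−S))·g(x,y), where g(x,y) = y·(1−x)/(1+y−x+y·x)²: along any solution (x(t), y(t)) with 0 < x(t) < 1 and 0 < y(t) < 1, d/dt H(x(t), y(t)) = 0. -/
noncomputable def gdyn (x y : ℝ) : ℝ := y * (1 - x) / (1 + y - x + y*x)^2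

/-- The conserved quantity `H` of the exploitation dynamics. -/
noncomputable def Hcons (T P S x y : ℝ) : ℝ :=
  -(P - S) * (Real.log x + 2 * Real.log (1 - y)) + (T - P) * x - (T - S) * y

/-- `H` is conserved along any interior solution of the Lotka-Volterra-type
learning dynamics. -/
theorem pd_conserved_quantity (T P S : ℝ) (x y : ℝ → ℝ)
    (hx : ∀ t, HasDerivAt x
      (x t * ((T - 2*P + S) - (T - S) * y t) * gdyn (x t) (y t)) t)
    (hy : ∀ t, HasDerivAt y
      ((1 - y t) * ((T - P) * x t - (P - S)) * gdyn (x t) (y t)) t)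
    (hxI : ∀ t, 0 < x t ∧ x t < 1) (hyI : ∀ t, 0 < y t ∧ y t < 1) :
    ∀ t, HasDerivAt (fun s => Hcons T P S (x s) (y s)) 0 t := by
  intro t
  obtain ⟨hx0, hx1⟩ := hxI t
  obtain ⟨hy0, hy1⟩ := hyI t
  have h1y : (1 : ℝ) - y t ≠ 0 := by linarith
  set G := gdyn (x t) (y t) with hG
  set x' := x t * ((T - 2*P + S) - (T - S) * y t) * G with hx'
  set y' := (1 - y t) * ((T - P) * x t - (P - S)) * G with hy'
  have hlx : HasDerivAt (fun s => Real.log (x s)) (x' / x t) t :=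
    (hx t).log (ne_of_gt hx0)
  have h1 : HasDerivAt (fun s => 1 - y s) (-y') t := by
    simpa using (hy t).const_sub 1
  have hly : HasDerivAt (fun s => Real.log (1 - y s)) (-y' / (1 - y t)) t :=
    h1.log h1y
  have hD : HasDerivAt (fun s => Hcons T P S (x s) (y s))
      (-(P - S) * (x' / x t + 2 * (-y' / (1 - y t))) + (T - P) * x' - (T - S) * y') t := by
    unfold Hcons
    exact (((hlx.add (hly.const_mul 2)).const_mul (-(P - S))).add
      ((hx t).const_mul (T - P))).sub ((hy t).const_mul (T - S))
  convert hD using 1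
  rw [hx', hy']
  field_simp
  ring
end

section
/- At the interior fixed point (x3*, y4*) = ((P−S)/(T−P), (T−2P+S)/(T−S)) of the exploitation dynamics, the expected payoffs of the two players computed from the stationary distribution proportional to (0, y4*·x3*, y4*, 1−x3*) with payoff vectors (R,S,T,P) and (R,T,S,P) are u* = (T+S)/2 and v* = P, respectively. -/
/-- At the interior fixed point `(x3*, y4*) = ((P−S)/(T−P), (T−2P+S)/(T−S))`,
the normalized stationary payoffs of the two players are `(T+S)/2` and `P`. -/
theorem pd_fixed_point_payoffs (T R P S : ℝ)
    (hTR : T > R) (hRP : R > P) (hPS : P > S) (hsub : T + S > 2*P) :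
    let x3 : ℝ := (P - S)/(T - P)
    let y4 : ℝ := (T - 2*P + S)/(T - S)
    let k : ℝ := 1 / (y4*x3 + y4 + (1 - x3))
    k * (S * (y4*x3) + T * y4 + P * (1 - x3)) = (T + S)/2 ∧
    k * (T * (y4*x3) + S * y4 + P * (1 - x3)) = P := by
  intro x3 y4 k
  have hTP : T - P > 0 := by linarith
  have hTS : T - S > 0 := by linarith
  have hd : T - 2*P + S > 0 := by linarith
  have hx3 : x3 = (P - S)/(T - P) := rfl
  have hy4 : y4 = (T - 2*P + S)/(T - S) := rfl
  have hD : y4*x3 + y4 + (1 - x3) = 2*(T - 2*P + S)/(T - P) := by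
    rw [hx3, hy4]
    field_simp
    ring
  have hDne : y4*x3 + y4 + (1 - x3) ≠ 0 := by
    rw [hD]; positivity
  have hk : k = (T - P)/(2*(T - 2*P + S)) := by
    show 1 / _ = _
    rw [hD]
    rw [one_div_div]
  constructor
  · rw [hk, hx3, hy4]
    field_simp [show T - P*2 + S ≠ 0 by linarith]
    ring
  · rw [hk, hx3, hy4]
    field_simp [show T - P*2 + S ≠ 0 by linarith]
    ring
end
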